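/- Let k be a field, m ≥ 1, and consider the ring B = k[x_1^{±1}, x_2^{±1}, y, t_1, t_2]/I where I is generated by x_1^{-m} − x_2^{-m}, x_1 − x_2 + y(t_1 − t_2), and P(x_1,y,t_1) − P(x_2,y,t_2) with P(x,y,t) = Σ_{n=1}^m C(m,n)(x^{-1}t)^n y^{n-1}. Writing x_1^{-m} − x_2^{-m} = (x_1^{-1} − x_2^{-1}) R(x_1^{-1}, x_2^{-1}), the ring B decomposes as a product B ≅ B_0 × B_1, where B_0 is the quotient by (x_1^{-1} − x_2^{-1}, x_1 − x_2 + y(t_1−t_2), P(x_1,y,t_1) − P(x_2,y,t_2)) and B_1 is the quotient by (R(x_1^{-1},x_2^{-1}), x_1 − x_2 + y(t_1−t_2), P(x_1,y,t_1) − P(x_2,y,t_2)). -/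

import Mathlib

open MvPolynomial

set_option synthInstance.maxHeartbeats 1000000
set_option maxHeartbeats 1000000

namespace Stmt7

variable (k : Type) [Field k] [IsAlgClosed k] [CharZero k] (m : ℕ)

/-- The Laurent ring `k[x₁^{±1}, x₂^{±1}, y, t₁, t₂]`, realized as the localization of
`k[x₁,x₂,y,t₁,t₂]` away from `x₁ x₂`. Variables: `X 0 = x₁`, `X 1 = x₂`, `X 2 = y`,
`X 3 = t₁`, `X 4 = t₂`. -/
abbrev S := Localization.Away ((X 0 * X 1 : MvPolynomial (Fin 5) k))

noncomputable def x₁ : S k := algebraMap (MvPolynomial (Fin 5) k) (S k) (X 0)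
noncomputable def x₂ : S k := algebraMap (MvPolynomial (Fin 5) k) (S k) (X 1)
noncomputable def y : S k := algebraMap (MvPolynomial (Fin 5) k) (S k) (X 2)
noncomputable def t₁ : S k := algebraMap (MvPolynomial (Fin 5) k) (S k) (X 3)
noncomputable def t₂ : S k := algebraMap (MvPolynomial (Fin 5) k) (S k) (X 4)

/-- `P(x,y,t) = Σ_{n=1}^m C(m,n) (x⁻¹ t)^n y^{n-1}`. -/
noncomputable def P (x t : S k) : S k :=
  ∑ n ∈ Finset.Icc 1 m, (m.choose n : S k) * (Ring.inverse x * t) ^ n * y k ^ (n - 1)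

/-- `R(a,b) = Σ_{i=0}^{m-1} a^i b^{m-1-i}`, so that `a^m − b^m = (a−b) R(a,b)`;
here evaluated at `a = x₁⁻¹`, `b = x₂⁻¹`. -/
noncomputable def Rpol : S k :=
  ∑ i ∈ Finset.range m, (Ring.inverse (x₁ k)) ^ i * (Ring.inverse (x₂ k)) ^ (m - 1 - i)

noncomputable def I : Ideal (S k) :=
  Ideal.span {(Ring.inverse (x₁ k)) ^ m - (Ring.inverse (x₂ k)) ^ m,
    x₁ k - x₂ k + y k * (t₁ k - t₂ k),
    P k m (x₁ k) (t₁ k) - P k m (x₂ k) (t₂ k)}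

noncomputable def I₀ : Ideal (S k) :=
  Ideal.span {Ring.inverse (x₁ k) - Ring.inverse (x₂ k),
    x₁ k - x₂ k + y k * (t₁ k - t₂ k),
    P k m (x₁ k) (t₁ k) - P k m (x₂ k) (t₂ k)}

noncomputable def I₁ : Ideal (S k) :=
  Ideal.span {Rpol k m,
    x₁ k - x₂ k + y k * (t₁ k - t₂ k),
    P k m (x₁ k) (t₁ k) - P k m (x₂ k) (t₂ k)}

/-- The ring `B = S/I` decomposes as the product `B₀ × B₁ = S/I₀ × S/I₁`, compatibly with
the quotient maps. -/
theorem stmt7 (hm : 1 ≤ m) :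
    ∃ e : (S k ⧸ I k m) ≃+* (S k ⧸ I₀ k m) × (S k ⧸ I₁ k m),
      ∀ s : S k, e (Ideal.Quotient.mk (I k m) s) =
        (Ideal.Quotient.mk (I₀ k m) s, Ideal.Quotient.mk (I₁ k m) s) := by

  classical
  set a := Ring.inverse (x₁ k) with ha
  set b := Ring.inverse (x₂ k) with hb
  set d := a - b with hd
  set g₂ := x₁ k - x₂ k + y k * (t₁ k - t₂ k) with hg₂
  set g₃ := P k m (x₁ k) (t₁ k) - P k m (x₂ k) (t₂ k) with hg₃
  -- key factorization
  have hfac : a ^ m - b ^ m = Rpol k m * d := by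
    rw [Rpol, hd]; exact (geom_sum₂_mul a b m).symm
  -- unit facts
  have hx2 : IsUnit (x₂ k) := by
    have h := IsLocalization.Away.algebraMap_isUnit (S := S k)
      (X 0 * X 1 : MvPolynomial (Fin 5) k)
    rw [map_mul] at h
    exact isUnit_of_mul_isUnit_right h
  have hbu : IsUnit b :=
    IsUnit.of_mul_eq_one _ (Ring.inverse_mul_cancel _ hx2)
  have hmu : IsUnit ((m : S k)) := by
    have hmk : ((m : k)) ≠ 0 := Nat.cast_ne_zero.mpr (by omega)
    have := (isUnit_iff_ne_zero.mpr hmk).map (algebraMap k (S k))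
    rwa [map_natCast] at this
  -- generator memberships
  have hdI₀ : d ∈ I₀ k m := Ideal.subset_span (by simp [hd, ha, hb])
  have hg₂I₀ : g₂ ∈ I₀ k m := Ideal.subset_span (by simp [hg₂])
  have hg₃I₀ : g₃ ∈ I₀ k m := Ideal.subset_span (by simp [hg₃])
  have hRI₁ : Rpol k m ∈ I₁ k m := Ideal.subset_span (by simp)
  have hg₂I₁ : g₂ ∈ I₁ k m := Ideal.subset_span (by simp [hg₂])
  have hg₃I₁ : g₃ ∈ I₁ k m := Ideal.subset_span (by simp [hg₃])
  have h1I : a ^ m - b ^ m ∈ I k m := Ideal.subset_span (by simp [ha, hb])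
  have hg₂I : g₂ ∈ I k m := Ideal.subset_span (by simp [hg₂])
  have hg₃I : g₃ ∈ I k m := Ideal.subset_span (by simp [hg₃])
  -- divisibility: d ∣ Rpol - m * b^(m-1)
  have hdvd : d ∣ Rpol k m - (m : S k) * b ^ (m - 1) := by
    have hsum : Rpol k m - (m : S k) * b ^ (m - 1)
        = ∑ i ∈ Finset.range m, (a ^ i * b ^ (m - 1 - i) - b ^ (m - 1)) := by
      rw [Finset.sum_sub_distrib, Finset.sum_const, Finset.card_range, Rpol,
        nsmul_eq_mul]
    rw [hsum]
    refine Finset.dvd_sum fun i hi => ?_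
    have hi' : i ≤ m - 1 := Nat.le_pred_of_lt (Finset.mem_range.mp hi)
    have : a ^ i * b ^ (m - 1 - i) - b ^ (m - 1)
        = (a ^ i - b ^ i) * b ^ (m - 1 - i) := by
      rw [sub_mul, ← pow_add, Nat.add_sub_cancel' hi']
    rw [this]
    exact (sub_dvd_pow_sub_pow a b i).mul_right _
  -- coprimality
  have hcop : IsCoprime (I₀ k m) (I₁ k m) := by
    rw [Ideal.isCoprime_iff_sup_eq]
    refine Ideal.eq_top_of_isUnit_mem _ (show (m : S k) * b ^ (m - 1) ∈ _ from ?_)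
      (hmu.mul (hbu.pow _))
    have h1 : Rpol k m - (m : S k) * b ^ (m - 1) ∈ I₀ k m := by
      obtain ⟨c, hc⟩ := hdvd
      rw [hc]
      exact Ideal.mul_mem_right _ _ hdI₀
    have h2 : Rpol k m ∈ I₀ k m ⊔ I₁ k m := Ideal.mem_sup_right hRI₁
    have h3 : Rpol k m - (m : S k) * b ^ (m - 1) ∈ I₀ k m ⊔ I₁ k m :=
      Ideal.mem_sup_left h1
    have := Submodule.sub_mem _ h2 h3
    simpa using this
  -- I ≤ I₀ ⊓ I₁
  have hle : I k m ≤ I₀ k m ⊓ I₁ k m := by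
    rw [I, Ideal.span_le]
    rintro z hz
    simp only [Set.mem_insert_iff, Set.mem_singleton_iff] at hz
    rcases hz with rfl | rfl | rfl
    · exact ⟨hfac ▸ Ideal.mul_mem_left _ _ hdI₀, hfac ▸ Ideal.mul_mem_right _ _ hRI₁⟩
    · exact ⟨hg₂I₀, hg₂I₁⟩
    · exact ⟨hg₃I₀, hg₃I₁⟩
  -- I₀ ⊓ I₁ ≤ I
  have hge : I₀ k m ⊓ I₁ k m ≤ I k m := by
    rw [Ideal.inf_eq_mul_of_isCoprime hcop, I₀, I₁, Ideal.span_mul_span',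
      Ideal.span_le]
    rintro z hz
    rw [Set.mem_mul] at hz
    obtain ⟨p, hp, q, hq, rfl⟩ := hz
    simp only [Set.mem_insert_iff, Set.mem_singleton_iff] at hp hq
    rcases hp with rfl | rfl | rfl
    · rcases hq with rfl | rfl | rfl
      · show d * Rpol k m ∈ (I k m : Set (S k))
        have : d * Rpol k m = a ^ m - b ^ m := by rw [hfac]; ring
        rw [this]; exact h1I
      · exact Ideal.mul_mem_left _ _ hg₂I
      · exact Ideal.mul_mem_left _ _ hg₃I
    · exact Ideal.mul_mem_right _ _ hg₂I
    · exact Ideal.mul_mem_right _ _ hg₃I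
  have hinf : I k m = I₀ k m ⊓ I₁ k m := le_antisymm hle hge
  refine ⟨(Ideal.quotEquivOfEq hinf).trans
    (Ideal.quotientInfEquivQuotientProd _ _ hcop), fun s => ?_⟩
  ext
  · simp [Ideal.quotEquivOfEq_mk, Ideal.Quotient.factor_mk]
  · simp [Ideal.quotEquivOfEq_mk, Ideal.Quotient.factor_mk]

end Stmt7
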